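/- Let A be a commutative ring, R a commutative A-algebra flat over A, and B a commutative A-algebra. Set R_B = R ⊗_A B and let P^n_{R/A} = (R ⊗_A R)/Δ_{R/A}^{n+1} be the module of principal parts. Then the natural map P^n_{R/A} ⊗_A B → P^n_{R_B/B} is an isomorphism of R_B-modules. -/

import Mathlib

open TensorProduct
attribute [local instance] Algebra.TensorProduct.rightAlgebra

section Aux
variable {A R B : Type*} [CommRing A] [CommRing R] [Algebra A R] [CommRing B] [Algebra A B]
open Algebra.TensorProduct

noncomputable def ppPsi : (R ⊗[A] R) →ₐ[A] ((R ⊗[A] B) ⊗[B] (R ⊗[A] B)) :=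
  productMap (includeLeft.comp includeLeft)
    ((includeRight.restrictScalars A).comp includeLeft)

@[simp] lemma ppPsi_tmul (r s : R) :
    (ppPsi : (R ⊗[A] R) →ₐ[A] _) (r ⊗ₜ[A] s) = (r ⊗ₜ[A] (1 : B)) ⊗ₜ[B] (s ⊗ₜ[A] (1 : B)) := by
  simp [ppPsi]


lemma ppSmul (c : B) (s : R) (b : B) : c • (s ⊗ₜ[A] b) = s ⊗ₜ[A] (c * b) := by
  rw [Algebra.smul_def]
  show ((1:R) ⊗ₜ[A] c) * (s ⊗ₜ[A] b) = _
  rw [Algebra.TensorProduct.tmul_mul_tmul, one_mul]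

noncomputable def ppPhi : ((R ⊗[A] R) ⊗[A] B) →ₐ[A] ((R ⊗[A] B) ⊗[B] (R ⊗[A] B)) :=
  productMap ppPsi (IsScalarTower.toAlgHom A B _)

@[simp] lemma ppPhi_tmul (r s : R) (b : B) :
    (ppPhi : ((R ⊗[A] R) ⊗[A] B) →ₐ[A] _) ((r ⊗ₜ[A] s) ⊗ₜ[A] b)
      = (r ⊗ₜ[A] b) ⊗ₜ[B] (s ⊗ₜ[A] (1 : B)) := by
  have : (algebraMap B ((R ⊗[A] B) ⊗[B] (R ⊗[A] B))) b = ((1:R) ⊗ₜ[A] b) ⊗ₜ[B] ((1:R) ⊗ₜ[A] (1:B)) := rfl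
  simp [ppPhi, this]

noncomputable def ppChi1 : (R ⊗[A] B) →ₐ[B] ((R ⊗[A] R) ⊗[A] B) :=
  { toRingHom := (map (includeLeft : R →ₐ[A] R ⊗[A] R) (AlgHom.id A B)).toRingHom
    commutes' := fun b => rfl }

noncomputable def ppChi2 : (R ⊗[A] B) →ₐ[B] ((R ⊗[A] R) ⊗[A] B) :=
  { toRingHom := (map (includeRight : R →ₐ[A] R ⊗[A] R) (AlgHom.id A B)).toRingHom
    commutes' := fun b => rfl }

noncomputable def ppInv : ((R ⊗[A] B) ⊗[B] (R ⊗[A] B)) →ₐ[B] ((R ⊗[A] R) ⊗[A] B) :=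
  productMap ppChi1 ppChi2

@[simp] lemma ppInv_tmul (r s : R) (b c : B) :
    (ppInv : ((R ⊗[A] B) ⊗[B] (R ⊗[A] B)) →ₐ[B] _) ((r ⊗ₜ[A] b) ⊗ₜ[B] (s ⊗ₜ[A] c))
      = (r ⊗ₜ[A] s) ⊗ₜ[A] (b * c) := by
  show (map (includeLeft : R →ₐ[A] R ⊗[A] R) (AlgHom.id A B)) (r ⊗ₜ b)
      * (map (includeRight : R →ₐ[A] R ⊗[A] R) (AlgHom.id A B)) (s ⊗ₜ c) = _
  simp [Algebra.TensorProduct.tmul_mul_tmul]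

lemma ppInv_phi (x : (R ⊗[A] R) ⊗[A] B) : ppInv (ppPhi x) = x := by
  induction x with
  | zero => simp
  | add x y hx hy => simp [map_add, hx, hy]
  | tmul s b =>
    induction s with
    | zero => simp [zero_tmul]
    | add x y hx hy => simp [add_tmul, map_add, hx, hy]
    | tmul r r' => simp

lemma ppPhi_inv (x : (R ⊗[A] B) ⊗[B] (R ⊗[A] B)) : ppPhi (ppInv x) = x := by
  induction x with
  | zero => simp
  | add x y hx hy => simp [map_add, hx, hy]
  | tmul u v =>
    induction u with
    | zero => simp [zero_tmul]
    | add x y hx hy => simp [add_tmul, map_add, hx, hy]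
    | tmul r b =>
      induction v with
      | zero => simp [tmul_zero]
      | add x y hx hy => simp [tmul_add, map_add, hx, hy]
      | tmul s c =>
        simp only [ppInv_tmul, ppPhi_tmul]
        rw [show (r ⊗ₜ[A] (b*c)) ⊗ₜ[B] (s ⊗ₜ[A] (1:B)) = c • ((r ⊗ₜ[A] b) ⊗ₜ[B] (s ⊗ₜ[A] (1:B))) from ?_ ,
           ← tmul_smul]
        · congr 1
          rw [ppSmul, mul_one]
        · rw [smul_tmul']
          congr 1
          rw [ppSmul, mul_comm]


lemma ppMul (x : (R ⊗[A] R) ⊗[A] B) :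
    (lmul' B (S := R ⊗[A] B)) (ppPhi x) =
      (Algebra.TensorProduct.map (lmul' A (S := R)) (AlgHom.id A B)) x := by
  induction x with
  | zero => simp
  | add x y hx hy => simp [map_add, hx, hy]
  | tmul s b =>
    induction s with
    | zero => simp [zero_tmul]
    | add x y hx hy => simp [add_tmul, map_add, hx, hy]
    | tmul r r' => simp [lmul'_apply_tmul]

noncomputable def ppEquiv : ((R ⊗[A] R) ⊗[A] B) ≃+* ((R ⊗[A] B) ⊗[B] (R ⊗[A] B)) :=
  { (ppPhi : ((R ⊗[A] R) ⊗[A] B) →ₐ[A] _).toRingHom with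
    invFun := ppInv
    left_inv := ppInv_phi
    right_inv := ppPhi_inv }

lemma ppComapJ :
    Ideal.comap (ppEquiv (A := A) (R := R) (B := B))
        (RingHom.ker (lmul' B (S := R ⊗[A] B))) =
      Ideal.map (includeLeft : (R ⊗[A] R) →ₐ[A] (R ⊗[A] R) ⊗[A] B)
        (RingHom.ker (lmul' A (S := R))) := by
  have h1 : Ideal.comap (ppEquiv (A := A) (R := R) (B := B))
      (RingHom.ker (lmul' B (S := R ⊗[A] B))) =
      RingHom.ker ((lmul' B (S := R ⊗[A] B)).toRingHom.comp
        (ppEquiv (A := A) (R := R) (B := B)).toRingHom) := by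
    ext x
    simp [RingHom.mem_ker, Ideal.mem_comap]
  rw [h1]
  have h2 : ((lmul' B (S := R ⊗[A] B)).toRingHom.comp
      (ppEquiv (A := A) (R := R) (B := B)).toRingHom) =
      (Algebra.TensorProduct.map (lmul' A (S := R)) (AlgHom.id A B)).toRingHom := by
    refine RingHom.ext fun x => ?_
    · exact ppMul _
  rw [h2]
  exact Algebra.TensorProduct.rTensor_ker (lmul' A (S := R))
    (fun r => ⟨r ⊗ₜ 1, by simp [lmul'_apply_tmul]⟩)


lemma ppPsiMul (x : R ⊗[A] R) :
    (lmul' B (S := R ⊗[A] B)) (ppPsi x) = (lmul' A (S := R) x) ⊗ₜ[A] (1 : B) := by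
  induction x with
  | zero => simp
  | add x y hx hy => simp [map_add, hx, hy, add_tmul]
  | tmul r r' => simp [lmul'_apply_tmul]

lemma ppMapIle :
    Ideal.map (ppPsi : (R ⊗[A] R) →ₐ[A] _).toRingHom (RingHom.ker (lmul' A (S := R))) ≤
      RingHom.ker (lmul' B (S := R ⊗[A] B)) := by
  rw [Ideal.map_le_iff_le_comap]
  intro x hx
  rw [RingHom.mem_ker] at hx
  simp only [Ideal.mem_comap, RingHom.mem_ker, AlgHom.toRingHom_eq_coe, RingHom.coe_coe]
  rw [ppPsiMul, hx, zero_tmul]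

end Aux

open Algebra.TensorProduct in
set_option maxHeartbeats 2000000 in
set_option synthInstance.maxHeartbeats 400000 in
/-- Let `A` be a commutative ring, `R` a flat commutative `A`-algebra, `B` a commutative
`A`-algebra and `R_B = R ⊗[A] B`.  With `P^n_{R/A} = (R ⊗[A] R)/Δ_{R/A}^{n+1}` the module
of principal parts, the natural map `P^n_{R/A} ⊗[A] B → P^n_{R_B/B}` (induced by the
canonical ring map `ψ : R ⊗[A] R → R_B ⊗[B] R_B`, `r ⊗ s ↦ (r ⊗ 1) ⊗ (s ⊗ 1)`) is an
isomorphism. -/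
theorem principal_parts_base_change {A R B : Type*} [CommRing A] [CommRing R] [Algebra A R]
    [CommRing B] [Algebra A B] [Module.Flat A R] (n : ℕ) :
    ∃ ψ : (R ⊗[A] R) →+* ((R ⊗[A] B) ⊗[B] (R ⊗[A] B)),
      (∀ r s : R, ψ (r ⊗ₜ[A] s) = (r ⊗ₜ[A] (1 : B)) ⊗ₜ[B] (s ⊗ₜ[A] (1 : B))) ∧
      ∃ φ : (((R ⊗[A] R) ⧸ (RingHom.ker (Algebra.TensorProduct.lmul' A (S := R))) ^ (n + 1))
              ⊗[A] B) →+*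
            (((R ⊗[A] B) ⊗[B] (R ⊗[A] B)) ⧸
              (RingHom.ker (Algebra.TensorProduct.lmul' B (S := R ⊗[A] B))) ^ (n + 1)),
        (∀ (x : R ⊗[A] R) (b : B),
          φ ((Ideal.Quotient.mk _ x) ⊗ₜ[A] b) =
            algebraMap B _ b * Ideal.Quotient.mk _ (ψ x)) ∧
        Function.Bijective φ := by
  refine ⟨(ppPsi : (R ⊗[A] R) →ₐ[A] _).toRingHom, fun r s => ppPsi_tmul r s, ?_⟩
  set I : Ideal (R ⊗[A] R) := RingHom.ker (lmul' A (S := R)) with hI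
  set J : Ideal ((R ⊗[A] B) ⊗[B] (R ⊗[A] B)) := RingHom.ker (lmul' B (S := R ⊗[A] B)) with hJ
  -- the map `f'` on quotients induced by `ppPsi`
  have hle : I ^ (n + 1) ≤ (J ^ (n + 1)).comap (ppPsi : (R ⊗[A] R) →ₐ[A] _) := by
    rw [← Ideal.map_le_iff_le_comap]
    calc Ideal.map (ppPsi : (R ⊗[A] R) →ₐ[A] _) (I ^ (n+1))
        = (Ideal.map (ppPsi : (R ⊗[A] R) →ₐ[A] _) I) ^ (n+1) := Ideal.map_pow _ _ _
      _ ≤ J ^ (n+1) := Ideal.pow_right_mono ppMapIle _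
  set f' := Ideal.quotientMapₐ (R₁ := A) (J ^ (n + 1)) (ppPsi : (R ⊗[A] R) →ₐ[A] _) hle with hf'
  set g' : B →ₐ[A] (((R ⊗[A] B) ⊗[B] (R ⊗[A] B)) ⧸ J ^ (n + 1)) :=
    IsScalarTower.toAlgHom A B _ with hg'
  set φa := productMap (S := ((R ⊗[A] B) ⊗[B] (R ⊗[A] B)) ⧸ J ^ (n + 1)) f' g' with hφa
  refine ⟨φa.toRingHom, ?_, ?_⟩
  · intro x b
    show φa ((Ideal.Quotient.mk (I ^ (n+1)) x) ⊗ₜ[A] b) = _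
    rw [hφa, productMap_apply_tmul, hf', Ideal.quotient_map_mkₐ]
    exact mul_comm (Ideal.Quotient.mk (J ^ (n+1)) (ppPsi x))
      (algebraMap B (((R ⊗[A] B) ⊗[B] (R ⊗[A] B)) ⧸ J ^ (n+1)) b)
  · -- bijectivity
    set μ := Algebra.TensorProduct.map (Ideal.Quotient.mkₐ A (I ^ (n+1))) (AlgHom.id A B) with hμ
    have hμs : Function.Surjective μ := by
      intro z
      induction z with
      | zero => exact ⟨0, map_zero _⟩
      | add x y hx hy =>
        obtain ⟨x', hx'⟩ := hx; obtain ⟨y', hy'⟩ := hy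
        exact ⟨x' + y', by rw [map_add, hx', hy']⟩
      | tmul q b =>
        obtain ⟨s, rfl⟩ := Ideal.Quotient.mk_surjective q
        exact ⟨s ⊗ₜ b, rfl⟩
    have hkey : ∀ x : (R ⊗[A] R) ⊗[A] B,
        φa (μ x) = Ideal.Quotient.mk (J ^ (n+1)) (ppPhi x) := by
      intro x
      induction x with
      | zero => simp
      | add x y hx hy => simp only [map_add, hx, hy]
      | tmul s b =>
        rw [hμ, Algebra.TensorProduct.map_tmul, hφa, productMap_apply_tmul]
        have h1 : ppPhi (s ⊗ₜ[A] b) = ppPsi s * algebraMap B _ b := by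
          rw [ppPhi, productMap_apply_tmul]; rfl
        rw [h1, map_mul]
        have e1 : f' ((Ideal.Quotient.mkₐ A (I ^ (n+1))) s)
            = Ideal.Quotient.mk (J ^ (n+1)) (ppPsi s) := by
          rw [hf']; exact Ideal.quotient_map_mkₐ _ _ _
        have e2 : g' ((AlgHom.id A B) b)
            = Ideal.Quotient.mk (J ^ (n+1)) ((algebraMap B ((R ⊗[A] B) ⊗[B] (R ⊗[A] B))) b) :=
          (Ideal.Quotient.mk_algebraMap B _ b).symm
        rw [e1, e2]
    have hkerμ : RingHom.ker μ =
        (Ideal.map (includeLeft : (R ⊗[A] R) →ₐ[A] (R ⊗[A] R) ⊗[A] B) I) ^ (n + 1) := by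
      rw [hμ]
      rw [Algebra.TensorProduct.rTensor_ker (Ideal.Quotient.mkₐ A (I ^ (n+1)))
        (Ideal.Quotient.mkₐ_surjective A _)]
      have hmk : RingHom.ker (Ideal.Quotient.mkₐ A (I ^ (n+1))) = I ^ (n+1) := by
        ext x
        simp [RingHom.mem_ker, Ideal.Quotient.eq_zero_iff_mem]
      rw [hmk, Ideal.map_pow]
    have hcomap : Ideal.comap (ppEquiv (A := A) (R := R) (B := B)) (J ^ (n + 1)) =
        (Ideal.map (includeLeft : (R ⊗[A] R) →ₐ[A] (R ⊗[A] R) ⊗[A] B) I) ^ (n + 1) := by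
      rw [← Ideal.map_symm, Ideal.map_pow, Ideal.map_symm, ppComapJ]
    constructor
    · -- injective
      rw [injective_iff_map_eq_zero]
      intro x hx
      obtain ⟨y, rfl⟩ := hμs x
      replace hx : φa (μ y) = 0 := hx
      rw [hkey] at hx
      rw [Ideal.Quotient.eq_zero_iff_mem] at hx
      have hy : y ∈ RingHom.ker μ := by
        rw [hkerμ, ← hcomap]
        exact hx
      rwa [RingHom.mem_ker] at hy
    · -- surjective
      intro z
      obtain ⟨t, rfl⟩ := Ideal.Quotient.mk_surjective z
      refine ⟨μ (ppInv t), ?_⟩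
      show φa (μ (ppInv t)) = _
      rw [hkey, ppPhi_inv]
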